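/- arXiv:1502.07004 — 2 statements merged into one kernel-verified Lean document; each statement's English description precedes it below -/
import Mathlib

section
/- Let Γ be a finite group and n ≥ 1 an integer. Then the number of tuples (x₁,y₁,…,xₙ,yₙ) ∈ Γ^{2n} with [x₁,y₁]⋯[xₙ,yₙ] = 1 equals |Γ|^{2n-1} · Σ_{π ∈ Irr(Γ)} (dim π)^{-(2n-2)}. -/
/-- A matrix representation is irreducible: the space is nonzero and the only invariant
subspaces are `⊥` and `⊤`. -/
def IsIrredMatRep {G : Type} [Group G] {n : ℕ}
    (ρ : G →* (Matrix (Fin n) (Fin n) ℂ)ˣ) : Prop :=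
  0 < n ∧ ∀ W : Submodule ℂ (Fin n → ℂ),
    (∀ g : G, W.map (Matrix.toLin' (ρ g : Matrix (Fin n) (Fin n) ℂ)) ≤ W) → W = ⊥ ∨ W = ⊤

/-- Two matrix representations are isomorphic: there is a linear equivalence intertwining
them. -/
def MatRepIso {G : Type} [Group G] {m n : ℕ} (σ : G →* (Matrix (Fin m) (Fin m) ℂ)ˣ)
    (ρ : G →* (Matrix (Fin n) (Fin n) ℂ)ˣ) : Prop :=
  ∃ e : (Fin m → ℂ) ≃ₗ[ℂ] (Fin n → ℂ), ∀ g : G,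
    e.toLinearMap ∘ₗ Matrix.toLin' (σ g : Matrix (Fin m) (Fin m) ℂ)
      = Matrix.toLin' (ρ g : Matrix (Fin n) (Fin n) ℂ) ∘ₗ e.toLinearMap

open scoped commutatorElement

set_option maxHeartbeats 1000000

namespace Frob
open scoped Classical

variable {Γ : Type} [Group Γ] [Fintype Γ]

lemma trace_toLin' {n : ℕ} (M : Matrix (Fin n) (Fin n) ℂ) :
    LinearMap.trace ℂ (Fin n → ℂ) (Matrix.toLin' M) = M.trace := by
  rw [LinearMap.trace_eq_matrix_trace ℂ (Pi.basisFun ℂ (Fin n)),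
    LinearMap.toMatrix_eq_toMatrix', LinearMap.toMatrix'_toLin']

lemma MatRepIso.trace_eq {m n : ℕ} {σ : Γ →* (Matrix (Fin m) (Fin m) ℂ)ˣ}
    {ρ : Γ →* (Matrix (Fin n) (Fin n) ℂ)ˣ} (h : MatRepIso σ ρ) (g : Γ) :
    (σ g : Matrix (Fin m) (Fin m) ℂ).trace = (ρ g : Matrix (Fin n) (Fin n) ℂ).trace := by
  obtain ⟨e, he⟩ := h
  have h2 : e.conj (Matrix.toLin' (σ g : Matrix (Fin m) (Fin m) ℂ))
      = Matrix.toLin' (ρ g : Matrix (Fin n) (Fin n) ℂ) := by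
    refine LinearMap.ext fun v => ?_
    have h1 := LinearMap.congr_fun (he g) (e.symm v)
    simpa [LinearEquiv.conj_apply] using h1
  rw [← trace_toLin' (σ g : Matrix (Fin m) (Fin m) ℂ), ← LinearMap.trace_conj' _ e, h2,
    trace_toLin']

lemma schur_zero {m n : ℕ} {σ : Γ →* (Matrix (Fin m) (Fin m) ℂ)ˣ}
    {ρ : Γ →* (Matrix (Fin n) (Fin n) ℂ)ˣ} (hσ : IsIrredMatRep σ) (hρ : IsIrredMatRep ρ)
    (hiso : ¬ MatRepIso σ ρ) (T : Matrix (Fin n) (Fin m) ℂ)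
    (hT : ∀ g : Γ, (ρ g : Matrix (Fin n) (Fin n) ℂ) * T = T * (σ g : Matrix (Fin m) (Fin m) ℂ)) :
    T = 0 := by
  by_contra hT0
  set L := Matrix.toLin' T with hL
  have hLne : L ≠ 0 := by
    intro h
    apply hT0
    have := congrArg LinearMap.toMatrix' h
    rwa [hL, LinearMap.toMatrix'_toLin', map_zero] at this
  have hcomm : ∀ g : Γ, Matrix.toLin' (ρ g : Matrix (Fin n) (Fin n) ℂ) ∘ₗ L
      = L ∘ₗ Matrix.toLin' (σ g : Matrix (Fin m) (Fin m) ℂ) := by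
    intro g; rw [hL, ← Matrix.toLin'_mul, ← Matrix.toLin'_mul, hT g]
  have hkerinv : ∀ g : Γ,
      (LinearMap.ker L).map (Matrix.toLin' (σ g : Matrix (Fin m) (Fin m) ℂ)) ≤ LinearMap.ker L := by
    intro g
    rintro x ⟨v, hv, rfl⟩
    simp only [SetLike.mem_coe, LinearMap.mem_ker] at hv ⊢
    have h1 := LinearMap.congr_fun (hcomm g) v
    simp only [LinearMap.comp_apply] at h1
    rw [← h1, hv, map_zero]
  have hrinv : ∀ g : Γ,
      (LinearMap.range L).map (Matrix.toLin' (ρ g : Matrix (Fin n) (Fin n) ℂ))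
        ≤ LinearMap.range L := by
    intro g
    rintro x ⟨v, ⟨w, rfl⟩, rfl⟩
    have h1 := LinearMap.congr_fun (hcomm g) w
    simp only [LinearMap.comp_apply] at h1
    exact ⟨_, h1.symm⟩
  have hker : LinearMap.ker L = ⊥ := by
    rcases hσ.2 _ hkerinv with h | h
    · exact h
    · exact absurd (LinearMap.ker_eq_top.mp h) hLne
  have hran : LinearMap.range L = ⊤ := by
    rcases hρ.2 _ hrinv with h | h
    · exact absurd (LinearMap.range_eq_bot.mp h) hLne
    · exact h
  apply hiso
  refine ⟨LinearEquiv.ofBijective L ⟨LinearMap.ker_eq_bot.mp hker, LinearMap.range_eq_top.mp hran⟩,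
    fun g => ?_⟩
  exact LinearMap.ext fun v => (LinearMap.congr_fun (hcomm g) v).symm

lemma schur_comm_scalar {n : ℕ} {ρ : Γ →* (Matrix (Fin n) (Fin n) ℂ)ˣ} (hρ : IsIrredMatRep ρ)
    (T : Matrix (Fin n) (Fin n) ℂ)
    (hT : ∀ g : Γ, (ρ g : Matrix (Fin n) (Fin n) ℂ) * T = T * (ρ g : Matrix (Fin n) (Fin n) ℂ)) :
    ∃ c : ℂ, T = c • 1 := by
  haveI : Nonempty (Fin n) := Fin.pos_iff_nonempty.mp hρ.1
  obtain ⟨c, hc⟩ := Module.End.exists_eigenvalue (Matrix.toLin' T)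
  refine ⟨c, ?_⟩
  set T' := T - c • 1 with hT'
  have h1 : ∀ g : Γ, (ρ g : Matrix (Fin n) (Fin n) ℂ) * T'
      = T' * (ρ g : Matrix (Fin n) (Fin n) ℂ) := by
    intro g
    rw [hT', Matrix.mul_sub, Matrix.sub_mul, hT g, Matrix.mul_smul, Matrix.smul_mul,
      Matrix.mul_one, Matrix.one_mul]
  obtain ⟨v, hv⟩ := hc.exists_hasEigenvector
  have hv0 : Matrix.toLin' T' v = 0 := by
    have h5 := hv.apply_eq_smul
    rw [hT', map_sub, map_smul, Matrix.toLin'_one]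
    simp [h5]
  have hkerinv : ∀ g : Γ,
      (LinearMap.ker (Matrix.toLin' T')).map (Matrix.toLin' (ρ g : Matrix (Fin n) (Fin n) ℂ))
        ≤ LinearMap.ker (Matrix.toLin' T') := by
    intro g
    rintro x ⟨w, hw, rfl⟩
    simp only [SetLike.mem_coe, LinearMap.mem_ker] at hw ⊢
    have h2 : Matrix.toLin' T' ∘ₗ Matrix.toLin' (ρ g : Matrix (Fin n) (Fin n) ℂ)
        = Matrix.toLin' (ρ g : Matrix (Fin n) (Fin n) ℂ) ∘ₗ Matrix.toLin' T' := by
      rw [← Matrix.toLin'_mul, ← Matrix.toLin'_mul, h1 g]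
    have h3 := LinearMap.congr_fun h2 w
    simp only [LinearMap.comp_apply] at h3
    rw [h3, hw, map_zero]
  have hker : LinearMap.ker (Matrix.toLin' T') = ⊤ := by
    rcases hρ.2 _ hkerinv with h | h
    · exfalso
      rw [Submodule.eq_bot_iff] at h
      exact hv.2 (h v (by simpa using hv0))
    · exact h
  have h6 : Matrix.toLin' T' = 0 := LinearMap.ker_eq_top.mp hker
  have h4 := congrArg LinearMap.toMatrix' h6
  rw [LinearMap.toMatrix'_toLin', map_zero, hT'] at h4
  exact sub_eq_zero.mp h4

lemma schur_comm_eq {n : ℕ} {ρ : Γ →* (Matrix (Fin n) (Fin n) ℂ)ˣ} (hρ : IsIrredMatRep ρ)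
    (T : Matrix (Fin n) (Fin n) ℂ)
    (hT : ∀ g : Γ, (ρ g : Matrix (Fin n) (Fin n) ℂ) * T = T * (ρ g : Matrix (Fin n) (Fin n) ℂ)) :
    T = (T.trace / n) • 1 := by
  obtain ⟨c, rfl⟩ := schur_comm_scalar hρ T hT
  have hn : (n : ℂ) ≠ 0 := Nat.cast_ne_zero.mpr hρ.1.ne'
  have ht : (c • (1 : Matrix (Fin n) (Fin n) ℂ)).trace = c * n := by
    simp [Matrix.trace_smul, Matrix.trace_one]
  rw [ht]
  congr 1
  field_simp


section Average

variable {m n : ℕ} (σ : Γ →* (Matrix (Fin m) (Fin m) ℂ)ˣ) (ρ : Γ →* (Matrix (Fin n) (Fin n) ℂ)ˣ)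

lemma average_apply (M : Matrix (Fin n) (Fin m) ℂ) (h : Γ) :
    (ρ h : Matrix (Fin n) (Fin n) ℂ) *
      (∑ g : Γ, (ρ g : Matrix (Fin n) (Fin n) ℂ) * M * (σ g⁻¹ : Matrix (Fin m) (Fin m) ℂ))
    = (∑ g : Γ, (ρ g : Matrix (Fin n) (Fin n) ℂ) * M * (σ g⁻¹ : Matrix (Fin m) (Fin m) ℂ)) *
      (σ h : Matrix (Fin m) (Fin m) ℂ) := by
  rw [Matrix.mul_sum, Matrix.sum_mul]
  refine Fintype.sum_equiv (Equiv.mulLeft h) _ _ fun g => ?_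
  show (ρ h : Matrix (Fin n) (Fin n) ℂ) * ((ρ g : Matrix (Fin n) (Fin n) ℂ) * M *
      (σ g⁻¹ : Matrix (Fin m) (Fin m) ℂ))
    = (ρ (h * g) : Matrix (Fin n) (Fin n) ℂ) * M * (σ ((h*g)⁻¹) : Matrix (Fin m) (Fin m) ℂ) *
      (σ h : Matrix (Fin m) (Fin m) ℂ)
  have e1 : (ρ (h * g) : Matrix (Fin n) (Fin n) ℂ)
      = (ρ h : Matrix (Fin n) (Fin n) ℂ) * (ρ g : Matrix (Fin n) (Fin n) ℂ) := by
    rw [map_mul]; rfl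
  have e2 : ((σ ((h * g)⁻¹) : Matrix (Fin m) (Fin m) ℂ))
      = (σ g⁻¹ : Matrix (Fin m) (Fin m) ℂ) * (σ h⁻¹ : Matrix (Fin m) (Fin m) ℂ) := by
    rw [mul_inv_rev, map_mul]; rfl
  have e3 : (σ h⁻¹ : Matrix (Fin m) (Fin m) ℂ) * (σ h : Matrix (Fin m) (Fin m) ℂ) = 1 := by
    rw [← Units.val_mul, ← map_mul, inv_mul_cancel, map_one, Units.val_one]
  rw [e1, e2]
  simp only [Matrix.mul_assoc]
  rw [e3, Matrix.mul_one]

lemma average_zero (hσ : IsIrredMatRep σ) (hρ : IsIrredMatRep ρ) (hiso : ¬ MatRepIso σ ρ)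
    (M : Matrix (Fin n) (Fin m) ℂ) :
    ∑ g : Γ, (ρ g : Matrix (Fin n) (Fin n) ℂ) * M * (σ g⁻¹ : Matrix (Fin m) (Fin m) ℂ) = 0 :=
  schur_zero hσ hρ hiso _ (fun h => average_apply σ ρ M h)

lemma average_smul (hρ : IsIrredMatRep ρ) (M : Matrix (Fin n) (Fin n) ℂ) :
    ∑ g : Γ, (ρ g : Matrix (Fin n) (Fin n) ℂ) * M * (ρ g⁻¹ : Matrix (Fin n) (Fin n) ℂ)
      = ((Fintype.card Γ : ℂ) * M.trace / n) • 1 := by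
  have key := schur_comm_eq hρ _ (fun h => average_apply ρ ρ M h)
  rw [key]
  congr 2
  rw [Matrix.trace_sum]
  have e1 : ∀ g : Γ, ((ρ g : Matrix (Fin n) (Fin n) ℂ) * M *
      (ρ g⁻¹ : Matrix (Fin n) (Fin n) ℂ)).trace = M.trace := by
    intro g
    rw [Matrix.trace_mul_cycle, ← Units.val_mul, ← map_mul, inv_mul_cancel,
      map_one, Units.val_one, Matrix.one_mul]
  simp only [e1, Finset.sum_const, Finset.card_univ, nsmul_eq_mul]

lemma entry_extract (P : Matrix (Fin n) (Fin n) ℂ) (Q : Matrix (Fin m) (Fin m) ℂ)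
    (a x : Fin n) (b y : Fin m) :
    (P * Matrix.single a b (1:ℂ) * Q) x y = P x a * Q b y := by
  simp [Matrix.mul_apply, Matrix.single, ite_and, mul_ite, ite_mul, zero_mul, mul_zero,
    Finset.sum_ite_eq, Finset.sum_ite_eq']

end Average


section Orth

variable {m n : ℕ} {σ : Γ →* (Matrix (Fin m) (Fin m) ℂ)ˣ} {ρ : Γ →* (Matrix (Fin n) (Fin n) ℂ)ˣ}

lemma swap_sums (f : Γ → Fin n → Fin m → ℂ) :
    ∑ g : Γ, ∑ a : Fin n, ∑ b : Fin m, f g a b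
      = ∑ a : Fin n, ∑ b : Fin m, ∑ g : Γ, f g a b := by
  rw [Finset.sum_comm]
  exact Finset.sum_congr rfl fun a _ => Finset.sum_comm

lemma trace_mul_trace_expand (g : Γ) :
    (ρ g : Matrix (Fin n) (Fin n) ℂ).trace * (σ g⁻¹ : Matrix (Fin m) (Fin m) ℂ).trace
      = ∑ a : Fin n, ∑ b : Fin m,
          (ρ g : Matrix (Fin n) (Fin n) ℂ) a a * (σ g⁻¹ : Matrix (Fin m) (Fin m) ℂ) b b := by
  rw [Matrix.trace, Matrix.trace, Finset.sum_mul_sum]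
  rfl

lemma orth_ne (hσ : IsIrredMatRep σ) (hρ : IsIrredMatRep ρ) (hiso : ¬ MatRepIso σ ρ) :
    ∑ g : Γ, (ρ g : Matrix (Fin n) (Fin n) ℂ).trace * (σ g⁻¹ : Matrix (Fin m) (Fin m) ℂ).trace
      = 0 := by
  have key : ∀ (a : Fin n) (b : Fin m),
      ∑ g : Γ, (ρ g : Matrix (Fin n) (Fin n) ℂ) a a * (σ g⁻¹ : Matrix (Fin m) (Fin m) ℂ) b b
        = 0 := by
    intro a b
    have h0 := average_zero σ ρ hσ hρ hiso (Matrix.single a b (1:ℂ))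
    have h1 := congrFun (congrFun h0 a) b
    rw [Matrix.sum_apply] at h1
    simp only [entry_extract] at h1
    exact h1.trans (Matrix.zero_apply a b)
  simp only [trace_mul_trace_expand (σ := σ) (ρ := ρ)]
  rw [swap_sums]
  exact Finset.sum_eq_zero fun a _ => Finset.sum_eq_zero fun b _ => key a b

lemma trace_std (a b : Fin n) :
    (Matrix.single a b (1:ℂ)).trace = if a = b then 1 else 0 := by
  simp only [Matrix.trace, Matrix.diag, Matrix.single, Matrix.of_apply]
  rcases eq_or_ne a b with rfl | hab
  · simp
  · rw [Finset.sum_eq_zero, if_neg hab]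
    intro i _
    rw [if_neg]
    rintro ⟨rfl, rfl⟩
    exact hab rfl

lemma orth_self (hρ : IsIrredMatRep ρ) :
    ∑ g : Γ, (ρ g : Matrix (Fin n) (Fin n) ℂ).trace * (ρ g⁻¹ : Matrix (Fin n) (Fin n) ℂ).trace
      = (Fintype.card Γ : ℂ) := by
  have hn : (n : ℂ) ≠ 0 := Nat.cast_ne_zero.mpr hρ.1.ne'
  have key : ∀ (a b : Fin n),
      ∑ g : Γ, (ρ g : Matrix (Fin n) (Fin n) ℂ) a a * (ρ g⁻¹ : Matrix (Fin n) (Fin n) ℂ) b b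
        = if a = b then (Fintype.card Γ : ℂ) / n else 0 := by
    intro a b
    have h0 := average_smul ρ hρ (Matrix.single a b (1:ℂ))
    have h1 := congrFun (congrFun h0 a) b
    rw [Matrix.sum_apply] at h1
    simp only [entry_extract] at h1
    rw [h1, trace_std, Matrix.smul_apply, Matrix.one_apply]
    rcases eq_or_ne a b with rfl | hab
    · simp
    · simp [hab]
  simp only [trace_mul_trace_expand (σ := ρ) (ρ := ρ)]
  rw [swap_sums]
  rw [Finset.sum_congr rfl fun a _ => Finset.sum_congr rfl fun b _ => key a b]
  have hrow : ∀ a : Fin n,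
      ∑ b : Fin n, (if a = b then (Fintype.card Γ : ℂ)/n else 0) = (Fintype.card Γ : ℂ)/n := by
    intro a; simp
  simp only [hrow, Finset.sum_const, Finset.card_univ, Fintype.card_fin, nsmul_eq_mul]
  field_simp

end Orth


section Central

variable {n : ℕ} {ρ : Γ →* (Matrix (Fin n) (Fin n) ℂ)ˣ}

lemma conj_trace_eq (ρ : Γ →* (Matrix (Fin n) (Fin n) ℂ)ˣ) (h y : Γ) :
    (ρ (h * y * h⁻¹) : Matrix (Fin n) (Fin n) ℂ).trace
      = (ρ y : Matrix (Fin n) (Fin n) ℂ).trace := by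
  have e : (ρ (h * y * h⁻¹) : Matrix (Fin n) (Fin n) ℂ)
      = (ρ h : Matrix (Fin n) (Fin n) ℂ) * (ρ y : Matrix (Fin n) (Fin n) ℂ) *
        (ρ h⁻¹ : Matrix (Fin n) (Fin n) ℂ) := by
    rw [map_mul, map_mul]; rfl
  rw [e, Matrix.trace_mul_cycle, ← Units.val_mul, ← map_mul, inv_mul_cancel, map_one,
    Units.val_one, Matrix.one_mul]

lemma central_sum (hρ : IsIrredMatRep ρ) :
    ∑ x : Γ, ∑ y : Γ, (ρ ⁅x, y⁆ : Matrix (Fin n) (Fin n) ℂ)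
      = ((Fintype.card Γ : ℂ)^2 / (n : ℂ)^2) • 1 := by
  have hcomm : ∀ x y : Γ, (ρ ⁅x, y⁆ : Matrix (Fin n) (Fin n) ℂ)
      = (ρ x : Matrix (Fin n) (Fin n) ℂ) * (ρ y : Matrix (Fin n) (Fin n) ℂ) *
        (ρ x⁻¹ : Matrix (Fin n) (Fin n) ℂ) * (ρ y⁻¹ : Matrix (Fin n) (Fin n) ℂ) := by
    intro x y
    rw [commutatorElement_def, map_mul, map_mul, map_mul]; rfl
  have step1 : ∀ y : Γ, ∑ x : Γ, (ρ ⁅x, y⁆ : Matrix (Fin n) (Fin n) ℂ)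
      = ((Fintype.card Γ : ℂ) * (ρ y : Matrix (Fin n) (Fin n) ℂ).trace / n) •
        (ρ y⁻¹ : Matrix (Fin n) (Fin n) ℂ) := by
    intro y
    have h0 := average_smul ρ hρ ((ρ y : Matrix (Fin n) (Fin n) ℂ))
    calc ∑ x : Γ, (ρ ⁅x, y⁆ : Matrix (Fin n) (Fin n) ℂ)
        = ∑ x : Γ, ((ρ x : Matrix (Fin n) (Fin n) ℂ) * (ρ y : Matrix (Fin n) (Fin n) ℂ) *
            (ρ x⁻¹ : Matrix (Fin n) (Fin n) ℂ)) * (ρ y⁻¹ : Matrix (Fin n) (Fin n) ℂ) := by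
          exact Finset.sum_congr rfl fun x _ => hcomm x y
      _ = (∑ x : Γ, (ρ x : Matrix (Fin n) (Fin n) ℂ) * (ρ y : Matrix (Fin n) (Fin n) ℂ) *
            (ρ x⁻¹ : Matrix (Fin n) (Fin n) ℂ)) * (ρ y⁻¹ : Matrix (Fin n) (Fin n) ℂ) := by
          rw [Matrix.sum_mul]
      _ = (((Fintype.card Γ : ℂ) * (ρ y : Matrix (Fin n) (Fin n) ℂ).trace / n) • 1) *
            (ρ y⁻¹ : Matrix (Fin n) (Fin n) ℂ) := by rw [h0]
      _ = ((Fintype.card Γ : ℂ) * (ρ y : Matrix (Fin n) (Fin n) ℂ).trace / n) •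
            (ρ y⁻¹ : Matrix (Fin n) (Fin n) ℂ) := by rw [Matrix.smul_mul, Matrix.one_mul]
  set Q : Matrix (Fin n) (Fin n) ℂ :=
    ∑ y : Γ, (ρ y : Matrix (Fin n) (Fin n) ℂ).trace • (ρ y⁻¹ : Matrix (Fin n) (Fin n) ℂ)
    with hQdef
  have hsum : ∑ y : Γ, ((Fintype.card Γ : ℂ) * (ρ y : Matrix (Fin n) (Fin n) ℂ).trace / n) •
      (ρ y⁻¹ : Matrix (Fin n) (Fin n) ℂ) = ((Fintype.card Γ : ℂ)/n) • Q := by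
    rw [hQdef, Finset.smul_sum]
    refine Finset.sum_congr rfl fun y _ => ?_
    rw [smul_smul]
    congr 1
    ring
  have hQcomm : ∀ h : Γ, (ρ h : Matrix (Fin n) (Fin n) ℂ) * Q
      = Q * (ρ h : Matrix (Fin n) (Fin n) ℂ) := by
    intro h
    rw [hQdef, Matrix.mul_sum, Matrix.sum_mul]
    refine Fintype.sum_equiv ((Equiv.mulLeft h).trans (Equiv.mulRight h⁻¹)) _ _ fun y => ?_
    show (ρ h : Matrix (Fin n) (Fin n) ℂ) * ((ρ y : Matrix (Fin n) (Fin n) ℂ).trace •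
        (ρ y⁻¹ : Matrix (Fin n) (Fin n) ℂ))
      = ((ρ (h * y * h⁻¹) : Matrix (Fin n) (Fin n) ℂ).trace •
        (ρ ((h * y * h⁻¹)⁻¹) : Matrix (Fin n) (Fin n) ℂ)) * (ρ h : Matrix (Fin n) (Fin n) ℂ)
    rw [Matrix.mul_smul, Matrix.smul_mul, conj_trace_eq]
    congr 1
    rw [← Units.val_mul, ← map_mul, ← Units.val_mul, ← map_mul]
    congr 2
    group
  have hQ : Q = ((Fintype.card Γ : ℂ)/n) • 1 := by
    have h1 := schur_comm_eq hρ Q hQcomm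
    have h2 : Q.trace = (Fintype.card Γ : ℂ) := by
      rw [hQdef, Matrix.trace_sum]
      calc ∑ y : Γ, ((ρ y : Matrix (Fin n) (Fin n) ℂ).trace •
              (ρ y⁻¹ : Matrix (Fin n) (Fin n) ℂ)).trace
          = ∑ y : Γ, (ρ y : Matrix (Fin n) (Fin n) ℂ).trace *
              (ρ y⁻¹ : Matrix (Fin n) (Fin n) ℂ).trace := by
            refine Finset.sum_congr rfl fun y _ => ?_
            rw [Matrix.trace_smul, smul_eq_mul]
        _ = _ := orth_self hρ
    rw [h1, h2]
  rw [Finset.sum_comm]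
  rw [Finset.sum_congr rfl fun y (_ : y ∈ Finset.univ) => step1 y, hsum, hQ, smul_smul]
  congr 1
  ring

end Central


section Regular

lemma toLin'_toMatrix {V : Type} [AddCommGroup V] [Module ℂ V] {k : ℕ}
    (b : Module.Basis (Fin k) ℂ V) (f : V →ₗ[ℂ] V) :
    Matrix.toLin' (LinearMap.toMatrix b b f)
      = b.equivFun.toLinearMap ∘ₗ f ∘ₗ b.equivFun.symm.toLinearMap := by
  apply LinearMap.ext; intro v
  have hv : v = ⇑(b.repr (b.equivFun.symm v)) := by
    rw [← Module.Basis.equivFun_apply, LinearEquiv.apply_symm_apply]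
  calc Matrix.toLin' (LinearMap.toMatrix b b f) v
      = (LinearMap.toMatrix b b f).mulVec v := by rw [Matrix.toLin'_apply]
    _ = (LinearMap.toMatrix b b f).mulVec ⇑(b.repr (b.equivFun.symm v)) := by rw [← hv]
    _ = ⇑(b.repr (f (b.equivFun.symm v))) := LinearMap.toMatrix_mulVec_repr b b f _
    _ = _ := by rw [← Module.Basis.equivFun_apply]; rfl

variable (Γ)

noncomputable def regBasis : Module.Basis Γ ℂ (MonoidAlgebra ℂ Γ) := MonoidAlgebra.basis Γ ℂ

instance : Module.Finite ℂ (MonoidAlgebra ℂ Γ) := Module.Finite.of_basis (regBasis Γ)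

lemma trace_mulLeft_single (g : Γ) :
    LinearMap.trace ℂ (MonoidAlgebra ℂ Γ) (LinearMap.mulLeft ℂ (MonoidAlgebra.single g 1))
      = if g = 1 then (Fintype.card Γ : ℂ) else 0 := by
  classical
  rw [LinearMap.trace_eq_matrix_trace ℂ (regBasis Γ), Matrix.trace]
  have hdiag : ∀ h : Γ, (LinearMap.toMatrix (regBasis Γ) (regBasis Γ)
      (LinearMap.mulLeft ℂ (MonoidAlgebra.single g (1:ℂ)))).diag h
        = if g = 1 then 1 else 0 := by
    intro h
    rw [Matrix.diag_apply, LinearMap.toMatrix_apply, LinearMap.mulLeft_apply]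
    have hb : regBasis Γ h = MonoidAlgebra.single h 1 := by
      rfl
    rw [hb, MonoidAlgebra.single_mul_single, one_mul]
    have hr : ((regBasis Γ).repr) (MonoidAlgebra.single (g*h) (1:ℂ))
        = Finsupp.single (g*h) (1:ℂ) := rfl
    rw [hr]
    show (Finsupp.single (g*h) (1:ℂ)) h = _
    rw [Finsupp.single_apply]
    by_cases hgh : g = 1
    · subst hgh; rw [if_pos (one_mul h), if_pos rfl]
    · rw [if_neg, if_neg hgh]
      intro hcon
      exact hgh (by rwa [mul_eq_right] at hcon)
  rw [Finset.sum_congr rfl fun h _ => hdiag h]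
  rcases eq_or_ne g 1 with rfl | hg
  · simp
  · simp [hg]

lemma reg_decomp :
    ∃ (κ : Type) (x : Fintype κ) (dd : κ → ℕ)
      (τ : ∀ S : κ, Γ →* (Matrix (Fin (dd S)) (Fin (dd S)) ℂ)ˣ),
      (∀ S, IsIrredMatRep (τ S)) ∧
      ∀ g : Γ,
        LinearMap.trace ℂ (MonoidAlgebra ℂ Γ) (LinearMap.mulLeft ℂ (MonoidAlgebra.single g 1))
          = ∑ S ∈ @Finset.univ κ x, (τ S g : Matrix (Fin (dd S)) (Fin (dd S)) ℂ).trace := by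
  classical
  obtain ⟨s, hindep, hsup, hsimple⟩ :=
    IsSemisimpleModule.exists_sSupIndep_sSup_simples_eq_top (MonoidAlgebra ℂ Γ) (MonoidAlgebra ℂ Γ)
  set N : s → Submodule ℂ (MonoidAlgebra ℂ Γ) :=
    fun S => (S : Submodule (MonoidAlgebra ℂ Γ) (MonoidAlgebra ℂ Γ)).restrictScalars ℂ with hN
  have hiind : iSupIndep (fun S : s => (S : Submodule (MonoidAlgebra ℂ Γ) (MonoidAlgebra ℂ Γ))) :=
    (sSupIndep_iff s).mp hindep
  have hisup : ⨆ S : s, (S : Submodule (MonoidAlgebra ℂ Γ) (MonoidAlgebra ℂ Γ)) = ⊤ := by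
    rw [← sSup_eq_iSup']; exact hsup
  have hint : DirectSum.IsInternal
      (fun S : s => (S : Submodule (MonoidAlgebra ℂ Γ) (MonoidAlgebra ℂ Γ))) :=
    DirectSum.isInternal_submodule_of_iSupIndep_of_iSup_eq_top hiind hisup
  have hintC : DirectSum.IsInternal N := hint
  have hNind : iSupIndep N :=
    ((DirectSum.isInternal_submodule_iff_iSupIndep_and_iSup_eq_top N).mp hintC).1
  have hne : ∀ S : s, N S ≠ ⊥ := by
    intro S hbot
    have hb : (S : Submodule (MonoidAlgebra ℂ Γ) (MonoidAlgebra ℂ Γ)) = ⊥ := by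
      rw [eq_bot_iff]
      intro x hx
      have : x ∈ N S := hx
      rw [hbot] at this
      simpa using this
    exact (isSimpleModule_iff_isAtom.mp (hsimple S S.2)).1 hb
  haveI ft1 : Fintype {S : s // N S ≠ ⊥} := hNind.fintypeNeBotOfFiniteDimensional
  haveI fts : Fintype s := Fintype.ofEquiv _ (Equiv.subtypeUnivEquiv hne)
  have hmaps : ∀ (g : Γ) (S : s),
      Set.MapsTo (LinearMap.mulLeft ℂ (MonoidAlgebra.single g (1:ℂ))) (N S) (N S) := by
    intro g S x hx
    have : MonoidAlgebra.single g (1:ℂ) * x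
        ∈ (S : Submodule (MonoidAlgebra ℂ Γ) (MonoidAlgebra ℂ Γ)) := by
      rw [← smul_eq_mul]
      exact (S : Submodule (MonoidAlgebra ℂ Γ) (MonoidAlgebra ℂ Γ)).smul_mem _ hx
    exact this
  have htr : ∀ g : Γ,
      LinearMap.trace ℂ (MonoidAlgebra ℂ Γ)
        (LinearMap.mulLeft ℂ (MonoidAlgebra.single g (1:ℂ)))
      = ∑ S : s, LinearMap.trace ℂ (N S)
          ((LinearMap.mulLeft ℂ (MonoidAlgebra.single g (1:ℂ))).restrict (hmaps g S)) :=
    fun g => LinearMap.trace_eq_sum_trace_restrict hintC (hmaps g)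
  haveI hfd : ∀ S : s, FiniteDimensional ℂ (N S) := fun S => inferInstance
  set dd : s → ℕ := fun S => Module.finrank ℂ (N S) with hdd
  set bb : ∀ S : s, Module.Basis (Fin (dd S)) ℂ (N S) := fun S => Module.finBasis ℂ (N S) with hbb
  set φ : ∀ S : s, Γ → (N S →ₗ[ℂ] N S) :=
    fun S g => (LinearMap.mulLeft ℂ (MonoidAlgebra.single g (1:ℂ))).restrict (hmaps g S) with hφ
  have φcoe : ∀ (S : s) (g : Γ) (x : N S),
      ((φ S g x : N S) : MonoidAlgebra ℂ Γ)
        = MonoidAlgebra.single g (1:ℂ) * (x : MonoidAlgebra ℂ Γ) := fun S g x => rfl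
  have φmul : ∀ (S : s) (g h : Γ), φ S (g * h) = φ S g ∘ₗ φ S h := by
    intro S g h
    apply LinearMap.ext; intro x
    apply Subtype.ext
    rw [φcoe]
    show _ = ((φ S g (φ S h x) : N S) : MonoidAlgebra ℂ Γ)
    rw [φcoe, φcoe, ← mul_assoc, MonoidAlgebra.single_mul_single, one_mul]
  have φone : ∀ S : s, φ S 1 = LinearMap.id := by
    intro S
    apply LinearMap.ext; intro x
    apply Subtype.ext
    rw [φcoe]
    show MonoidAlgebra.single (1:Γ) (1:ℂ) * (x : MonoidAlgebra ℂ Γ) = (x : MonoidAlgebra ℂ Γ)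
    rw [← MonoidAlgebra.one_def, one_mul]
  have hmulmat : ∀ (S : s) (g h : Γ),
      LinearMap.toMatrix (bb S) (bb S) (φ S g) * LinearMap.toMatrix (bb S) (bb S) (φ S h)
        = LinearMap.toMatrix (bb S) (bb S) (φ S (g * h)) := by
    intro S g h
    rw [φmul, LinearMap.toMatrix_comp (bb S) (bb S) (bb S)]
  have honemat : ∀ S : s, LinearMap.toMatrix (bb S) (bb S) (φ S 1) = 1 := by
    intro S; rw [φone, LinearMap.toMatrix_id]
  set τ : ∀ S : s, Γ →* (Matrix (Fin (dd S)) (Fin (dd S)) ℂ)ˣ := fun S =>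
    { toFun := fun g =>
        ⟨LinearMap.toMatrix (bb S) (bb S) (φ S g), LinearMap.toMatrix (bb S) (bb S) (φ S g⁻¹),
          by rw [hmulmat, mul_inv_cancel, honemat],
          by rw [hmulmat, inv_mul_cancel, honemat]⟩
      map_one' := Units.ext (honemat S)
      map_mul' := fun g h => Units.ext (hmulmat S g h).symm } with hτ
  have hτval : ∀ (S : s) (g : Γ),
      (τ S g : Matrix (Fin (dd S)) (Fin (dd S)) ℂ) = LinearMap.toMatrix (bb S) (bb S) (φ S g) :=
    fun S g => rfl
  have hnontriv : ∀ S : s, Nontrivial (N S) := by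
    intro S
    exact Submodule.nontrivial_iff_ne_bot.mpr (hne S)
  have hirr : ∀ S : s, IsIrredMatRep (τ S) := by
    intro S
    haveI := hnontriv S
    constructor
    · exact Module.finrank_pos
    · intro W hW
      set E := (bb S).equivFun with hE
      set W' : Submodule ℂ (N S) := W.map (E.symm.toLinearMap) with hW'
      have hW'inv : ∀ (g : Γ) (x : N S), x ∈ W' → φ S g x ∈ W' := by
        intro g x hx
        obtain ⟨w, hw, rfl⟩ := hx
        refine Submodule.mem_map.mpr
          ⟨Matrix.toLin' ((τ S g : Matrix (Fin (dd S)) (Fin (dd S)) ℂ)) w,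
            hW g ⟨w, hw, rfl⟩, ?_⟩
        rw [hτval, toLin'_toMatrix]
        simp only [LinearMap.coe_comp, LinearEquiv.coe_coe, Function.comp_apply,
          LinearEquiv.coe_toLinearMap, LinearEquiv.symm_apply_apply]
        exact E.symm_apply_apply _
      set U' : Submodule ℂ (MonoidAlgebra ℂ Γ) := W'.map (N S).subtype with hU'
      have hU'g : ∀ (g : Γ) (c : ℂ) (x : MonoidAlgebra ℂ Γ), x ∈ U' →
          MonoidAlgebra.single g c * x ∈ U' := by
        intro g c x hx
        obtain ⟨v, hv, rfl⟩ := hx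
        have h1 : MonoidAlgebra.single g c * ((N S).subtype v)
            = c • (MonoidAlgebra.single g (1:ℂ) * (v : MonoidAlgebra ℂ Γ)) := by
          rw [← smul_mul_assoc, MonoidAlgebra.smul_single', mul_one]
          rfl
        rw [h1, ← φcoe]
        exact U'.smul_mem c ⟨φ S g v, hW'inv g v hv, rfl⟩
      have hU'a : ∀ (a : MonoidAlgebra ℂ Γ) (x : MonoidAlgebra ℂ Γ), x ∈ U' → a * x ∈ U' := by
        intro a x hx
        have ha : a = ∑ g : Γ, MonoidAlgebra.single g (a.coeff g) := by
          apply MonoidAlgebra.coeff_injective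
          apply Finsupp.ext
          intro h
          rw [MonoidAlgebra.coeff_sum, Finsupp.finset_sum_apply]
          simp [Finsupp.single_apply]
        rw [ha, Finset.sum_mul]
        exact Submodule.sum_mem _ fun g _ => hU'g g (a.coeff g) x hx
      set UA : Submodule (MonoidAlgebra ℂ Γ) (MonoidAlgebra ℂ Γ) :=
        { carrier := U'
          add_mem' := fun h1 h2 => U'.add_mem h1 h2
          zero_mem' := U'.zero_mem
          smul_mem' := fun a x hx => by
            rw [smul_eq_mul]; exact hU'a a x hx } with hUA
      have hUAle : UA ≤ (S : Submodule (MonoidAlgebra ℂ Γ) (MonoidAlgebra ℂ Γ)) := by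
        intro x hx
        obtain ⟨v, hv, rfl⟩ := hx
        exact v.2
      have hAtom : IsAtom (S : Submodule (MonoidAlgebra ℂ Γ) (MonoidAlgebra ℂ Γ)) :=
        isSimpleModule_iff_isAtom.mp (hsimple S S.2)
      have hWsub : Function.Injective ((N S).subtype) := Submodule.injective_subtype _
      have hEinj : Function.Injective (E.symm.toLinearMap) := E.symm.injective
      rcases eq_or_ne UA (S : Submodule (MonoidAlgebra ℂ Γ) (MonoidAlgebra ℂ Γ)) with hcase | hcase
      · right
        have hU'NS : U' = N S := by
          apply le_antisymm
          · intro x hx; obtain ⟨v, hv, rfl⟩ := hx; exact v.2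
          · intro x hx
            have : x ∈ UA := by rw [hcase]; exact hx
            exact this
        have hW'top : W' = ⊤ := by
          apply Submodule.map_injective_of_injective hWsub
          rw [← hU', hU'NS, Submodule.map_top, Submodule.range_subtype]
        apply Submodule.map_injective_of_injective hEinj
        rw [← hW', hW'top, Submodule.map_top]
        exact (LinearMap.range_eq_top.mpr E.symm.surjective).symm
      · left
        have hUAbot : UA = ⊥ := hAtom.2 _ (lt_of_le_of_ne hUAle hcase)
        have hU'bot : U' = ⊥ := by
          rw [eq_bot_iff]
          intro x hx
          have : x ∈ UA := hx
          rw [hUAbot] at this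
          simpa using this
        have hW'bot : W' = ⊥ := by
          apply Submodule.map_injective_of_injective hWsub
          rw [← hU', hU'bot, Submodule.map_bot]
        apply Submodule.map_injective_of_injective hEinj
        rw [← hW', hW'bot, Submodule.map_bot]
  refine ⟨s, fts, dd, τ, hirr, fun g => ?_⟩
  rw [htr g]
  refine Finset.sum_congr rfl fun S _ => ?_
  rw [LinearMap.trace_eq_matrix_trace ℂ (bb S), hτval]

end Regular

lemma sum_prod_ofFn {R : Type} [Semiring R] {β : Type} [Fintype β] (F : β → R) :
    ∀ n : ℕ, ∑ t : Fin n → β, (List.ofFn (fun k => F (t k))).prod = (∑ b : β, F b) ^ n := by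
  intro n
  induction n with
  | zero => simp
  | succ n ih =>
    have he : ∀ p : β × (Fin n → β),
        F p.1 * (List.ofFn (fun k : Fin n => F (p.2 k))).prod
          = (List.ofFn (fun k : Fin (n+1) => F ((Fin.consEquiv (fun _ : Fin (n+1) => β)) p k))).prod := by
      intro p
      rw [List.ofFn_succ, List.prod_cons]
      simp [Fin.consEquiv]
    calc ∑ t : Fin (n+1) → β, (List.ofFn (fun k => F (t k))).prod
        = ∑ p : β × (Fin n → β), F p.1 * (List.ofFn (fun k : Fin n => F (p.2 k))).prod :=
          (Fintype.sum_equiv (Fin.consEquiv (fun _ : Fin (n+1) => β)) _ _ he).symm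
      _ = ∑ b : β, ∑ t : Fin n → β, F b * (List.ofFn (fun k => F (t k))).prod := by
          rw [Fintype.sum_prod_type]
      _ = ∑ b : β, F b * ∑ t : Fin n → β, (List.ofFn (fun k => F (t k))).prod := by
          exact Finset.sum_congr rfl fun b _ => (Finset.mul_sum _ _ _).symm
      _ = (∑ b : β, F b) * (∑ b : β, F b) ^ n := by rw [ih, ← Finset.sum_mul]
      _ = (∑ b : β, F b) ^ (n+1) := by rw [← pow_succ']

end Frob

set_option maxHeartbeats 2000000 in
/-- Frobenius formula: for a finite group `Γ` and `n ≥ 1`, the number of tuples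
`(x₁,y₁,…,xₙ,yₙ)` with `[x₁,y₁]⋯[xₙ,yₙ] = 1` equals
`|Γ|^{2n-1} · Σ_{π ∈ Irr(Γ)} (dim π)^{-(2n-2)}`, where `Irr(Γ)` is (parametrized by) a complete
family of pairwise non-isomorphic irreducible representations. -/
theorem stmt_1 (Γ : Type) [Group Γ] [Fintype Γ] (n : ℕ) (hn : 1 ≤ n)
    (ι : Type) [Fintype ι] (d : ι → ℕ)
    (ρ : ∀ i : ι, Γ →* (Matrix (Fin (d i)) (Fin (d i)) ℂ)ˣ)
    (hirr : ∀ i, IsIrredMatRep (ρ i))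
    (hdist : ∀ i j, i ≠ j → ¬ MatRepIso (ρ i) (ρ j))
    (hexh : ∀ (m : ℕ) (σ : Γ →* (Matrix (Fin m) (Fin m) ℂ)ˣ),
      IsIrredMatRep σ → ∃ i, MatRepIso σ (ρ i)) :
    (Nat.card {t : Fin n → Γ × Γ //
        (List.ofFn (fun k : Fin n => ⁅(t k).1, (t k).2⁆)).prod = 1} : ℝ)
      = (Fintype.card Γ : ℝ) ^ (2 * n - 1) * ∑ i : ι, ((d i : ℝ) ^ (2 * n - 2))⁻¹ := by
  classical
  have hcardC : (Fintype.card Γ : ℂ) ≠ 0 := Nat.cast_ne_zero.mpr Fintype.card_ne_zero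
  obtain ⟨κ, xκ, dd, τ, hτirr, hτtr⟩ := Frob.reg_decomp Γ
  letI := xκ
  have hchoice : ∀ S : κ, ∃ i : ι, MatRepIso (τ S) (ρ i) := fun S => hexh _ (τ S) (hτirr S)
  choose iS hiS using hchoice
  set χ : ι → Γ → ℂ := fun i g => (ρ i g : Matrix (Fin (d i)) (Fin (d i)) ℂ).trace with hχ
  have hχ1 : ∀ j : ι, χ j 1 = (d j : ℂ) := by
    intro j
    show ((ρ j 1 : Matrix (Fin (d j)) (Fin (d j)) ℂ)).trace = _
    rw [map_one, Units.val_one, Matrix.trace_one]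
    simp
  have hreg : ∀ g : Γ, (if g = 1 then (Fintype.card Γ : ℂ) else 0) = ∑ S : κ, χ (iS S) g := by
    intro g
    rw [← Frob.trace_mulLeft_single Γ g, hτtr g]
    exact Finset.sum_congr rfl fun S _ => Frob.MatRepIso.trace_eq (hiS S) g
  have horth : ∀ i j : ι, ∑ g : Γ, χ i g * χ j g⁻¹
      = if i = j then (Fintype.card Γ : ℂ) else 0 := by
    intro i j
    rcases eq_or_ne i j with rfl | hij
    · rw [if_pos rfl]; exact Frob.orth_self (hirr i)
    · rw [if_neg hij]; exact Frob.orth_ne (hirr j) (hirr i) (hdist j i hij.symm)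
  have hfib : ∀ j : ι,
      (((Finset.univ.filter (fun S : κ => iS S = j)).card : ℂ)) = (d j : ℂ) := by
    intro j
    have h1 : ∑ g : Γ, (if g = 1 then (Fintype.card Γ : ℂ) else 0) * χ j g⁻¹
        = (Fintype.card Γ : ℂ) * (d j : ℂ) := by
      rw [Finset.sum_eq_single 1]
      · rw [if_pos rfl, inv_one, hχ1 j]
      · intro g _ hg; rw [if_neg hg, zero_mul]
      · intro h; exact absurd (Finset.mem_univ 1) h
    have h2 : ∑ g : Γ, (∑ S : κ, χ (iS S) g) * χ j g⁻¹
        = (Fintype.card Γ : ℂ) * ((Finset.univ.filter (fun S : κ => iS S = j)).card : ℂ) := by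
      calc ∑ g : Γ, (∑ S : κ, χ (iS S) g) * χ j g⁻¹
          = ∑ g : Γ, ∑ S : κ, χ (iS S) g * χ j g⁻¹ := by
            exact Finset.sum_congr rfl fun g _ => Finset.sum_mul _ _ _
        _ = ∑ S : κ, ∑ g : Γ, χ (iS S) g * χ j g⁻¹ := Finset.sum_comm
        _ = ∑ S : κ, (if iS S = j then (Fintype.card Γ : ℂ) else 0) :=
            Finset.sum_congr rfl fun S _ => horth (iS S) j
        _ = _ := by
            rw [Finset.sum_ite, Finset.sum_const, Finset.sum_const_zero, add_zero,
              nsmul_eq_mul, mul_comm]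
    have h3 : ∑ g : Γ, (if g = 1 then (Fintype.card Γ : ℂ) else 0) * χ j g⁻¹
        = ∑ g : Γ, (∑ S : κ, χ (iS S) g) * χ j g⁻¹ :=
      Finset.sum_congr rfl fun g _ => by rw [hreg g]
    have := h1.symm.trans (h3.trans h2)
    exact (mul_left_cancel₀ hcardC this).symm
  have hH1 : ∀ g : Γ, ∑ j : ι, (d j : ℂ) * χ j g
      = if g = 1 then (Fintype.card Γ : ℂ) else 0 := by
    intro g
    rw [hreg g]
    calc ∑ j : ι, (d j : ℂ) * χ j g
        = ∑ j : ι, ∑ S ∈ Finset.univ.filter (fun S : κ => iS S = j), χ (iS S) g := by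
          refine Finset.sum_congr rfl fun j _ => ?_
          rw [Finset.sum_congr rfl (fun S hS => by rw [(Finset.mem_filter.mp hS).2]),
            Finset.sum_const, nsmul_eq_mul, ← hfib j]
      _ = ∑ S : κ, χ (iS S) g := Finset.sum_fiberwise _ _ _
  -- counting
  have hcount : ((Nat.card {t : Fin n → Γ × Γ //
        (List.ofFn (fun k : Fin n => ⁅(t k).1, (t k).2⁆)).prod = 1} : ℕ) : ℂ)
      = ∑ t : Fin n → Γ × Γ,
          (if (List.ofFn (fun k : Fin n => ⁅(t k).1, (t k).2⁆)).prod = 1 then (1:ℂ) else 0) := by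
    rw [Finset.sum_boole, Nat.card_eq_fintype_card, Fintype.card_subtype]
  have hmat : ∀ (j : ι) (t : Fin n → Γ × Γ),
      (ρ j ((List.ofFn (fun k : Fin n => ⁅(t k).1, (t k).2⁆)).prod) :
          Matrix (Fin (d j)) (Fin (d j)) ℂ)
        = (List.ofFn (fun k : Fin n =>
            (ρ j ⁅(t k).1, (t k).2⁆ : Matrix (Fin (d j)) (Fin (d j)) ℂ))).prod := by
    intro j t
    have h := map_list_prod ((Units.coeHom (Matrix (Fin (d j)) (Fin (d j)) ℂ)).comp (ρ j))
      (List.ofFn (fun k : Fin n => ⁅(t k).1, (t k).2⁆))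
    rw [List.map_ofFn] at h
    exact h
  have hsumt : ∀ j : ι, ∑ t : Fin n → Γ × Γ,
      χ j ((List.ofFn (fun k : Fin n => ⁅(t k).1, (t k).2⁆)).prod)
        = ((Fintype.card Γ : ℂ)^2/(d j : ℂ)^2)^n * (d j : ℂ) := by
    intro j
    calc ∑ t : Fin n → Γ × Γ, χ j ((List.ofFn (fun k : Fin n => ⁅(t k).1, (t k).2⁆)).prod)
        = ∑ t : Fin n → Γ × Γ, ((List.ofFn (fun k : Fin n =>
            (ρ j ⁅(t k).1, (t k).2⁆ : Matrix (Fin (d j)) (Fin (d j)) ℂ))).prod).trace := by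
          refine Finset.sum_congr rfl fun t _ => ?_
          show ((ρ j ((List.ofFn (fun k : Fin n => ⁅(t k).1, (t k).2⁆)).prod) :
            Matrix (Fin (d j)) (Fin (d j)) ℂ)).trace = _
          rw [hmat j t]
      _ = (∑ t : Fin n → Γ × Γ, (List.ofFn (fun k : Fin n =>
            (ρ j ⁅(t k).1, (t k).2⁆ : Matrix (Fin (d j)) (Fin (d j)) ℂ))).prod).trace :=
          (Matrix.trace_sum _ _).symm
      _ = (((∑ p : Γ × Γ, (ρ j ⁅p.1, p.2⁆ : Matrix (Fin (d j)) (Fin (d j)) ℂ))) ^ n).trace := by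
          rw [Frob.sum_prod_ofFn
            (fun p : Γ × Γ => (ρ j ⁅p.1, p.2⁆ : Matrix (Fin (d j)) (Fin (d j)) ℂ)) n]
      _ = ((Fintype.card Γ : ℂ)^2/(d j : ℂ)^2)^n * (d j : ℂ) := by
          rw [Fintype.sum_prod_type, Frob.central_sum (hirr j), smul_pow, one_pow,
            Matrix.trace_smul, smul_eq_mul, Matrix.trace_one]
          simp
  have hC : ((Nat.card {t : Fin n → Γ × Γ //
        (List.ofFn (fun k : Fin n => ⁅(t k).1, (t k).2⁆)).prod = 1} : ℕ) : ℂ)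
      = (Fintype.card Γ : ℂ) ^ (2 * n - 1) * ∑ i : ι, ((d i : ℂ) ^ (2 * n - 2))⁻¹ := by
    obtain ⟨m, rfl⟩ : ∃ m, n = m + 1 := ⟨n - 1, by omega⟩
    rw [hcount]
    have step1 : ∀ t : Fin (m+1) → Γ × Γ,
        (if (List.ofFn (fun k : Fin (m+1) => ⁅(t k).1, (t k).2⁆)).prod = 1 then (1:ℂ) else 0)
          = (Fintype.card Γ : ℂ)⁻¹ * ∑ j : ι, (d j : ℂ) *
              χ j ((List.ofFn (fun k : Fin (m+1) => ⁅(t k).1, (t k).2⁆)).prod) := by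
      intro t
      rw [hH1]
      by_cases hp : (List.ofFn (fun k : Fin (m+1) => ⁅(t k).1, (t k).2⁆)).prod = 1
      · rw [if_pos hp, if_pos hp, inv_mul_cancel₀ hcardC]
      · rw [if_neg hp, if_neg hp, mul_zero]
    calc ∑ t : Fin (m+1) → Γ × Γ,
          (if (List.ofFn (fun k : Fin (m+1) => ⁅(t k).1, (t k).2⁆)).prod = 1 then (1:ℂ) else 0)
        = (Fintype.card Γ : ℂ)⁻¹ * ∑ j : ι, (d j : ℂ) *
            (((Fintype.card Γ : ℂ)^2/(d j : ℂ)^2)^(m+1) * (d j : ℂ)) := by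
          rw [Finset.sum_congr rfl fun t _ => step1 t, ← Finset.mul_sum, Finset.sum_comm]
          congr 1
          refine Finset.sum_congr rfl fun j _ => ?_
          rw [← Finset.mul_sum, hsumt j]
      _ = (Fintype.card Γ : ℂ) ^ (2 * (m+1) - 1) * ∑ i : ι, ((d i : ℂ) ^ (2 * (m+1) - 2))⁻¹ := by
          have e1 : 2 * (m+1) - 1 = 2*m + 1 := by omega
          have e2 : 2 * (m+1) - 2 = 2*m := by omega
          rw [e1, e2, Finset.mul_sum, Finset.mul_sum]
          refine Finset.sum_congr rfl fun j _ => ?_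
          have hdj : ((d j : ℂ)) ≠ 0 := Nat.cast_ne_zero.mpr (hirr j).1.ne'
          field_simp
          ring_nf
          simp only [inv_pow]; field_simp
  apply Complex.ofReal_injective
  push_cast [Complex.ofReal_sum]
  exact hC
end

section
/- Let f(s) be a Dirichlet series Σ_{n≥0} aₙ p^{-ns} (p a fixed prime) with real coefficients satisfying 1/C < aₙ < C for n > C, which agrees on its domain of absolute convergence with a rational function R of p^{-s}. Then s = 0 is a simple pole of R (viewed as a function of s). -/
open Polynomial Finset Filter Topology Set

lemma sum_bounds (C : ℝ) (hC : 0 < C) (a : ℕ → ℝ)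
    (ha : ∀ n : ℕ, C < (n : ℝ) → 1 / C < a n ∧ a n < C)
    (x : ℝ) (hx0 : 0 < x) (hx1 : x < 1) (L : ℝ)
    (hL : HasSum (fun n : ℕ => a n * x ^ n) L) :
    x ^ (⌈C⌉₊ + 1) / C - (∑ n ∈ range (⌈C⌉₊ + 1), |a n|) * (1 - x) ≤ (1 - x) * L ∧
    (1 - x) * L ≤ (∑ n ∈ range (⌈C⌉₊ + 1), |a n|) * (1 - x) + C * x ^ (⌈C⌉₊ + 1) := by
  set N := ⌈C⌉₊ + 1 with hN
  set B := ∑ n ∈ range N, |a n| with hB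
  have hxN : (0:ℝ) < x ^ N := pow_pos hx0 N
  have hmem : ∀ n : ℕ, N ≤ n → 1 / C < a n ∧ a n < C := by
    intro n hn
    refine ha n ?_
    calc C ≤ (⌈C⌉₊ : ℝ) := Nat.le_ceil C
    _ < n := by exact_mod_cast Nat.lt_of_lt_of_le (Nat.lt_succ_self _) hn
  have htail : HasSum (fun k : ℕ => a (k + N) * x ^ (k + N)) (L - ∑ n ∈ range N, a n * x ^ n) :=
    (hasSum_nat_add_iff (f := fun n : ℕ => a n * x ^ n) N).2 (by simpa using hL)
  have hxabs : |x| < 1 := by rw [abs_of_pos hx0]; exact hx1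
  have hgeo : HasSum (fun k : ℕ => x ^ k) (1 - x)⁻¹ := hasSum_geometric_of_lt_one hx0.le hx1
  have hgeoU : HasSum (fun k : ℕ => C * x ^ N * x ^ k) (C * x ^ N * (1 - x)⁻¹) :=
    hgeo.mul_left _
  have hgeoL : HasSum (fun k : ℕ => x ^ N / C * x ^ k) (x ^ N / C * (1 - x)⁻¹) :=
    hgeo.mul_left _
  have hTU : L - ∑ n ∈ range N, a n * x ^ n ≤ C * x ^ N * (1 - x)⁻¹ := by
    refine hasSum_le (fun k => ?_) htail hgeoU
    have := (hmem (k + N) (Nat.le_add_left _ _)).2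
    have hp : (0:ℝ) < x ^ (k + N) := pow_pos hx0 _
    calc a (k + N) * x ^ (k + N) ≤ C * x ^ (k + N) := by nlinarith
    _ = C * x ^ N * x ^ k := by rw [pow_add]; ring
  have hTL : x ^ N / C * (1 - x)⁻¹ ≤ L - ∑ n ∈ range N, a n * x ^ n := by
    refine hasSum_le (fun k => ?_) hgeoL htail
    have := (hmem (k + N) (Nat.le_add_left _ _)).1
    have hp : (0:ℝ) < x ^ (k + N) := pow_pos hx0 _
    calc x ^ N / C * x ^ k = 1 / C * x ^ (k + N) := by rw [pow_add]; ring
    _ ≤ a (k + N) * x ^ (k + N) := by nlinarith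
  have hPB : |∑ n ∈ range N, a n * x ^ n| ≤ B := by
    calc |∑ n ∈ range N, a n * x ^ n| ≤ ∑ n ∈ range N, |a n * x ^ n| := abs_sum_le_sum_abs _ _
    _ ≤ ∑ n ∈ range N, |a n| := by
        refine Finset.sum_le_sum fun n _ => ?_
        rw [abs_mul]
        have h1 : |x ^ n| ≤ 1 := by
          rw [abs_pow]; exact pow_le_one₀ (abs_nonneg x) hxabs.le
        nlinarith [abs_nonneg (a n)]
  have h1x : (0:ℝ) < 1 - x := by linarith
  have hPl : -B ≤ ∑ n ∈ range N, a n * x ^ n := neg_le_of_abs_le hPB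
  have hPu : ∑ n ∈ range N, a n * x ^ n ≤ B := le_of_abs_le hPB
  constructor
  · have : x ^ N / C * (1 - x)⁻¹ - B ≤ L := by linarith
    have h2 : x ^ N / C - B * (1 - x) ≤ (1 - x) * L := by
      have := mul_le_mul_of_nonneg_left this h1x.le
      calc x ^ N / C - B * (1 - x) = (1 - x) * (x ^ N / C * (1 - x)⁻¹ - B) := by
            field_simp
      _ ≤ (1 - x) * L := this
    exact h2
  · have : L ≤ B + C * x ^ N * (1 - x)⁻¹ := by linarith
    have := mul_le_mul_of_nonneg_left this h1x.le
    calc (1 - x) * L ≤ (1 - x) * (B + C * x ^ N * (1 - x)⁻¹) := this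
    _ = B * (1 - x) + C * x ^ N := by field_simp

lemma key_poly_id (R : RatFunc ℝ) :
    ((1 - RatFunc.X) * R).num * R.denom =
      (1 - Polynomial.X) * R.num * ((1 - RatFunc.X) * R).denom := by
  apply RatFunc.algebraMap_injective ℝ
  push_cast [map_mul, map_sub, map_one, RatFunc.algebraMap_X]
  have h1 := RatFunc.num_div_denom ((1 - RatFunc.X) * R)
  have h2 := RatFunc.num_div_denom R
  rw [div_eq_iff (RatFunc.algebraMap_ne_zero (RatFunc.denom_ne_zero _))] at h1 h2
  rw [h1, h2]; ring

/-- Let `f(s) = Σ_{n≥0} aₙ p^{-ns}` with `1/C < aₙ < C` for `n > C`, and suppose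
`f` agrees on `s > 0` with a rational function `R` of `p^{-s}` (in lowest terms `num/denom`,
with the denominator nonvanishing there).  Then `s = 0` is a simple pole of `R`:
`(1 - T)·R(T)` is regular and nonzero at `T = 1`, i.e. its (coprime) numerator and denominator
are both nonvanishing at `1`. -/
theorem stmt_18 (p : ℕ) (hp : p.Prime) (C : ℝ) (hC : 0 < C) (a : ℕ → ℝ)
    (ha : ∀ n : ℕ, C < (n : ℝ) → 1 / C < a n ∧ a n < C) (R : RatFunc ℝ)
    (hR : ∀ s : ℝ, 0 < s →
      Polynomial.eval ((p : ℝ) ^ (-s)) R.denom ≠ 0 ∧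
      HasSum (fun n : ℕ => a n * (p : ℝ) ^ (-(n : ℝ) * s))
        (Polynomial.eval ((p : ℝ) ^ (-s)) R.num / Polynomial.eval ((p : ℝ) ^ (-s)) R.denom)) :
    Polynomial.eval (1 : ℝ) ((1 - RatFunc.X) * R).denom ≠ 0 ∧
    Polynomial.eval (1 : ℝ) ((1 - RatFunc.X) * R).num ≠ 0 := by
  have hid := key_poly_id R
  set S := (1 - RatFunc.X) * R with hS
  set n1 := S.num with hn1
  set d1 := S.denom with hd1def
  set N := ⌈C⌉₊ + 1 with hN
  set B := ∑ n ∈ range N, |a n| with hB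
  set g : ℝ → ℝ := fun x => (1 - x) * (eval x R.num / eval x R.denom) with hg
  have hp1 : (1:ℝ) < (p:ℝ) := by exact_mod_cast hp.one_lt
  have hppos : (0:ℝ) < (p:ℝ) := by linarith
  have hlogp : 0 < Real.log p := Real.log_pos hp1
  -- key facts for x ∈ Ioo 0 1
  have hkey : ∀ x ∈ Set.Ioo (0:ℝ) 1,
      eval x n1 = g x * eval x d1 ∧
      x ^ N / C - B * (1 - x) ≤ g x ∧ g x ≤ B * (1 - x) + C * x ^ N := by
    rintro x ⟨hx0, hx1⟩
    set s : ℝ := -(Real.log x / Real.log p) with hs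
    have hlx : Real.log x < 0 := Real.log_neg hx0 hx1
    have hspos : 0 < s := by
      have := div_neg_of_neg_of_pos hlx hlogp
      rw [hs]; linarith
    have hxs : (p:ℝ) ^ (-s) = x := by
      rw [Real.rpow_def_of_pos hppos, hs, neg_neg]
      have hne : Real.log p ≠ 0 := ne_of_gt hlogp
      rw [show Real.log ↑p * (Real.log x / Real.log p) = Real.log x by field_simp]
      exact Real.exp_log hx0
    obtain ⟨hd, hsum⟩ := hR s hspos
    rw [hxs] at hd hsum
    have heq : (fun n : ℕ => a n * (p:ℝ) ^ (-(n:ℝ) * s)) = fun n : ℕ => a n * x ^ n := by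
      funext n
      rw [show -(n:ℝ) * s = (-s) * (n:ℝ) by ring, Real.rpow_mul hppos.le,
        Real.rpow_natCast, hxs]
    rw [heq] at hsum
    have bounds := sum_bounds C hC a ha x hx0 hx1 _ hsum
    have hev : eval x n1 * eval x R.denom = (1 - x) * eval x R.num * eval x d1 := by
      have := congrArg (Polynomial.eval x) hid
      simpa using this
    have hrel : eval x n1 = g x * eval x d1 := by
      rw [hg]
      field_simp
      linear_combination hev
    exact ⟨hrel, bounds.1, bounds.2⟩
  set l : Filter ℝ := 𝓝[<] (1:ℝ) with hl
  have hIoo : Set.Ioo (0:ℝ) 1 ∈ l := Ioo_mem_nhdsLT_of_mem (by constructor <;> norm_num)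
  have hEkey : ∀ᶠ x in l, eval x n1 = g x * eval x d1 ∧
      x ^ N / C - B * (1 - x) ≤ g x ∧ g x ≤ B * (1 - x) + C * x ^ N :=
    eventually_of_mem hIoo hkey
  have hClow : Continuous (fun x : ℝ => x ^ N / C - B * (1 - x)) := by
    exact ((continuous_pow N).div_const C).sub
      (continuous_const.mul (continuous_const.sub continuous_id))
  have hCup : Continuous (fun x : ℝ => B * (1 - x) + C * x ^ N) := by
    exact (continuous_const.mul (continuous_const.sub continuous_id)).add
      (continuous_const.mul (continuous_pow N))
  have hlowt : Tendsto (fun x : ℝ => x ^ N / C - B * (1 - x)) (𝓝 1) (𝓝 (1 / C)) := by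
    have := hClow.tendsto 1
    simpa using this
  have hupt : Tendsto (fun x : ℝ => B * (1 - x) + C * x ^ N) (𝓝 1) (𝓝 C) := by
    have := hCup.tendsto 1
    simpa using this
  have hhalf : (1:ℝ)/(2*C) < 1/C := by
    rw [div_lt_div_iff₀ (by positivity) hC]; nlinarith
  have hlowl : ∀ᶠ x in l, 1/(2*C) < x ^ N / C - B * (1 - x) :=
    (hlowt.eventually_const_lt hhalf).filter_mono nhdsWithin_le_nhds
  have hupl : ∀ᶠ x in l, B * (1 - x) + C * x ^ N < C + 1 :=
    (hupt.eventually_lt_const (by linarith)).filter_mono nhdsWithin_le_nhds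
  have Eg : ∀ᶠ x in l, 1/(2*C) < g x ∧ g x < C + 1 ∧ eval x n1 = g x * eval x d1 := by
    filter_upwards [hEkey, hlowl, hupl] with x hk hlo hu
    exact ⟨lt_of_lt_of_le hlo hk.2.1, lt_of_le_of_lt hk.2.2 hu, hk.1⟩
  have hcontn : Tendsto (fun x => eval x n1) l (𝓝 (eval 1 n1)) :=
    (n1.continuous.tendsto 1).mono_left nhdsWithin_le_nhds
  have hcontd : Tendsto (fun x => eval x d1) l (𝓝 (eval 1 d1)) :=
    (d1.continuous.tendsto 1).mono_left nhdsWithin_le_nhds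
  have hCpos : (0:ℝ) < 1/(2*C) := by positivity
  have hd1 : eval (1:ℝ) d1 ≠ 0 := by
    intro h0
    have ht0 : Tendsto (fun x => eval x d1) l (𝓝 0) := by rw [← h0]; exact hcontd
    have hsq : Tendsto (fun x => eval x n1) l (𝓝 0) := by
      apply squeeze_zero_norm' (a := fun x => (C + 1) * ‖eval x d1‖)
      · filter_upwards [Eg] with x hx
        rw [hx.2.2, norm_mul]
        have habs : ‖g x‖ ≤ C + 1 := by
          rw [Real.norm_eq_abs, abs_le]
          constructor <;> [linarith [hx.1]; linarith [hx.2.1]]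
        exact mul_le_mul_of_nonneg_right habs (norm_nonneg _)
      · have := ht0.norm.const_mul (C + 1)
        simpa using this
    have hn10 : eval (1:ℝ) n1 = 0 := tendsto_nhds_unique hcontn hsq
    obtain ⟨u, v, huv⟩ := RatFunc.isCoprime_num_denom S
    have := congrArg (Polynomial.eval (1:ℝ)) huv
    simp only [eval_add, eval_mul, eval_one, ← hn1, ← hd1def, hn10, h0, mul_zero, add_zero] at this
    exact one_ne_zero this.symm
  refine ⟨hd1, ?_⟩
  intro hn0
  have hne : ∀ᶠ x in l, eval x d1 ≠ 0 := hcontd.eventually_ne hd1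
  have hdiv : Tendsto (fun x => eval x n1 / eval x d1) l (𝓝 0) := by
    have := hcontn.div hcontd hd1
    rw [hn0, zero_div] at this
    exact this
  have hgl : Tendsto g l (𝓝 0) := by
    apply hdiv.congr'
    filter_upwards [Eg, hne] with x hx hxne
    rw [hx.2.2, mul_div_cancel_right₀ _ hxne]
  have hle : 1/(2*C) ≤ (0:ℝ) :=
    ge_of_tendsto hgl (by filter_upwards [Eg] with x hx; exact hx.1.le)
  linarith
end
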